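/- arXiv:math/0306210 — 17 statements merged into one kernel-verified Lean document; each statement's English description precedes it below -/
import Mathlib

section
/- If a ternary semigroup (G,[ ]) contains an element e such that [eye] = y for all y in G, then the binary operation x∗y = [xey] is associative and [xyz] = (x∗y)∗z for all x,y,z in G, i.e. the ternary operation is derived from this binary semigroup. -/
/-- If a ternary semigroup (G,[ ]) contains an element e such that
[eye] = y for all y, then x∗y = [xey] is associative and [xyz] = (x∗y)∗z. -/
theorem stmt_0 {G : Type*} (m : G → G → G → G)
    (hassoc : ∀ x y z u v : G,
      m (m x y z) u v = m x (m y z u) v ∧ m x (m y z u) v = m x y (m z u v))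
    (e : G) (he : ∀ y : G, m e y e = y) :
    (∀ x y z : G, m (m x e y) e z = m x e (m y e z)) ∧
    (∀ x y z : G, m x y z = m (m x e y) e z) := by
  constructor
  · intro x y z
    rw [(hassoc x e y e z).1, (hassoc x e y e z).2]
  · intro x y z
    rw [(hassoc x e y e z).1, he y]
end

section
/- Let (G,[ ]) be a ternary semigroup with elements e and a such that [eye] = y and [aya] = y for all y in G. Then the binary semigroups (G,∗) with x∗y = [xey] and (G,⋄) with x⋄y = [xay] are isomorphic, via the map φ(x) = [xae] with inverse ψ(x) = [eax]. -/
/-- If e,a satisfy [eye]=y and [aya]=y for all y, then the binary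
semigroups (G,∗), x∗y=[xey], and (G,⋄), x⋄y=[xay], are isomorphic via
φ(x)=[xae] with inverse ψ(x)=[eax]. -/
theorem stmt_1 {G : Type*} (m : G → G → G → G)
    (hassoc : ∀ x y z u v : G,
      m (m x y z) u v = m x (m y z u) v ∧ m x (m y z u) v = m x y (m z u v))
    (e a : G) (he : ∀ y : G, m e y e = y) (ha : ∀ y : G, m a y a = y) :
    let φ : G → G := fun x => m x a e
    let ψ : G → G := fun x => m e a x
    -- φ is a homomorphism (G,∗) → (G,⋄) and ψ a homomorphism (G,⋄) → (G,∗):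
    (∀ x y : G, φ (m x e y) = m (φ x) a (φ y)) ∧
    (∀ x y : G, ψ (m x a y) = m (ψ x) e (ψ y)) ∧
    -- ψ is a two-sided inverse of φ:
    (∀ x : G, ψ (φ x) = x) ∧ (∀ x : G, φ (ψ x) = x) := by
  intro φ ψ
  have h1 : ∀ x y z u v : G, m (m x y z) u v = m x (m y z u) v :=
    fun x y z u v => (hassoc x y z u v).1
  have h2 : ∀ x y z u v : G, m x (m y z u) v = m x y (m z u v) :=
    fun x y z u v => (hassoc x y z u v).2
  -- key commutation: m e x y = m x e y
  have key : ∀ x y : G, m e x y = m x e y := by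
    intro x y
    calc m e x y = m e x (m e y e) := by rw [he y]
      _ = m e (m x e y) e := (h2 e x e y e).symm
      _ = m x e y := he _
  refine ⟨?_, ?_, ?_, ?_⟩
  · intro x y
    show m (m x e y) a e = m (m x a e) a (m y a e)
    calc m (m x e y) a e = m x (m e y a) e := h1 ..
      _ = m x e (m y a e) := h2 ..
      _ = m x (m a e a) (m y a e) := by rw [ha e]
      _ = m (m x a e) a (m y a e) := (h1 ..).symm
  · intro x y
    show m e a (m x a y) = m (m e a x) e (m e a y)
    calc m e a (m x a y) = m e (m a x a) y := (h2 ..).symm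
      _ = m e x y := by rw [ha x]
      _ = m x e y := key x y
      _ = m (m e x e) e y := by rw [he x]
      _ = m e (m x e e) y := h1 ..
      _ = m e (m a (m x e e) a) y := by rw [ha (m x e e)]
      _ = m e (m a x (m e e a)) y := by rw [h2 a x e e a]
      _ = m (m e a x) (m e e a) y := (h1 ..).symm
      _ = m (m e a x) e (m e a y) := h2 ..
  · intro x
    show m e a (m x a e) = x
    calc m e a (m x a e) = m e (m a x a) e := (h2 ..).symm
      _ = m e x e := by rw [ha x]
      _ = x := he x
  · intro x
    show m (m e a x) a e = x
    calc m (m e a x) a e = m e (m a x a) e := h1 ..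
      _ = m e x e := by rw [ha x]
      _ = x := he x
end

section
/- For any ternary semigroup (G,[ ]) with a left identity e (i.e. [eex] = x for all x), the binary operation x⊙y = [xey] is associative, the map μ(x) = [exe] is an endomorphism of (G,⊙), and [xyz] = x⊙μ(y)⊙z for all x,y,z in G. -/
/-- For a ternary semigroup with a left identity e ([eex]=x), the
operation x⊙y=[xey] is associative, μ(x)=[exe] is an endomorphism of (G,⊙),
and [xyz] = x⊙μ(y)⊙z. -/
theorem stmt_2 {G : Type*} (m : G → G → G → G)
    (hassoc : ∀ x y z u v : G,
      m (m x y z) u v = m x (m y z u) v ∧ m x (m y z u) v = m x y (m z u v))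
    (e : G) (he : ∀ x : G, m e e x = x) :
    (∀ x y z : G, m (m x e y) e z = m x e (m y e z)) ∧
    (∀ x y : G, m e (m x e y) e = m (m e x e) e (m e y e)) ∧
    (∀ x y z : G, m x y z = m (m x e (m e y e)) e z) := by
  have h1 : ∀ x y z u v : G, m (m x y z) u v = m x (m y z u) v :=
    fun x y z u v => (hassoc x y z u v).1
  have h2 : ∀ x y z u v : G, m x (m y z u) v = m x y (m z u v) :=
    fun x y z u v => (hassoc x y z u v).2
  refine ⟨fun x y z => ?_, fun x y => ?_, fun x y z => ?_⟩
  · rw [h1, h2]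
  · have lhs : m e (m x e y) e = m e x (m e y e) := h2 e x e y e
    have rhs : m (m e x e) e (m e y e) = m e x (m e y e) := by
      rw [h1, h2, he]
    rw [lhs, rhs]
  · have key : m e (m e y e) e = m y e e := by
      rw [h2, he]
    rw [h1, key, h2, he]
end

section
/- A ternary semigroup is left and right cancellative if and only if it is middle cancellative; consequently a ternary semigroup is cancellative (left, middle and right) if and only if it is middle cancellative, and if and only if it is left and right cancellative. -/
/-- A ternary semigroup is left and right cancellative iff it is
middle cancellative; cancellative iff middle cancellative iff left and right
cancellative. -/
theorem stmt_3 {G : Type*} (m : G → G → G → G)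
    (hassoc : ∀ x y z u v : G,
      m (m x y z) u v = m x (m y z u) v ∧ m x (m y z u) v = m x y (m z u v)) :
    let L := ∀ a b x y : G, m a b x = m a b y → x = y
    let M := ∀ a b x y : G, m a x b = m a y b → x = y
    let R := ∀ a b x y : G, m x a b = m y a b → x = y
    ((L ∧ R) ↔ M) ∧ ((L ∧ M ∧ R) ↔ M) ∧ ((L ∧ M ∧ R) ↔ (L ∧ R)) := by
  intro L M R
  have key : (L ∧ R) ↔ M := by
    constructor
    · rintro ⟨hL, hR⟩ a b x y h
      have e : m (m x a x) b b = m (m x a y) b b := by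
        rw [(hassoc x a x b b).1, (hassoc x a y b b).1, h]
      exact hL x a x y (hR b b _ _ e)
    · intro hM
      constructor
      · intro a b x y h
        have e : m a (m b x b) a = m a (m b y b) a := by
          rw [← (hassoc a b x b a).1, ← (hassoc a b y b a).1, h]
        exact hM b b x y (hM a a _ _ e)
      · intro a b x y h
        have e : m b (m a x a) b = m b (m a y a) b := by
          rw [(hassoc b a x a b).2, (hassoc b a y a b).2, h]
        exact hM a a x y (hM b b _ _ e)
  refine ⟨key, ?_, ?_⟩
  · constructor
    · rintro ⟨_, hM, _⟩; exact hM
    · intro hM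
      obtain ⟨hL, hR⟩ := key.mpr hM
      exact ⟨hL, hM, hR⟩
  · constructor
    · rintro ⟨hL, _, hR⟩; exact ⟨hL, hR⟩
    · rintro h
      exact ⟨h.1, key.mp h, h.2⟩
end

section
/- If a ternary semigroup (G,[ ]) satisfies the identity [xyz] = [yxz] and there exist a,b in G with [axb] = x for all x, then (G,[ ]) is commutative, i.e. [xyz] is invariant under all permutations of x,y,z. -/
/-- If a ternary semigroup satisfies [xyz]=[yxz] and there are a,b
with [axb]=x for all x, then it is commutative (invariant under all
permutations of the three arguments). -/
theorem stmt_4 {G : Type*} (m : G → G → G → G)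
    (hassoc : ∀ x y z u v : G,
      m (m x y z) u v = m x (m y z u) v ∧ m x (m y z u) v = m x y (m z u v))
    (hcomm12 : ∀ x y z : G, m x y z = m y x z)
    (a b : G) (hab : ∀ x : G, m a x b = x) :
    ∀ x y z : G, m x y z = m y x z ∧ m x y z = m x z y ∧ m x y z = m z y x ∧
      m x y z = m y z x ∧ m x y z = m z x y := by
  have l1 : ∀ x y z : G, m a b (m x y z) = m x y z := by
    intro x y z
    have : m x y z = m a b (m x y z) :=
      calc m x y z = m (m a x b) y z := by rw [hab]
        _ = m a (m x b y) z := (hassoc a x b y z).1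
        _ = m a (m b x y) z := by rw [hcomm12 x b]
        _ = m a b (m x y z) := (hassoc a b x y z).2
    exact this.symm
  have l2 : ∀ y z : G, m b y z = m y z b := by
    intro y z
    calc m b y z = m b y (m a z b) := by rw [hab]
      _ = m b (m y a z) b := ((hassoc b y a z b).2).symm
      _ = m b (m a y z) b := by rw [hcomm12 y a]
      _ = m b a (m y z b) := (hassoc b a y z b).2
      _ = m a b (m y z b) := by rw [hcomm12 b a]
      _ = m y z b := l1 y z b
  have l3 : ∀ x y z : G, m x y z = m a x (m b y z) := by
    intro x y z
    calc m x y z = m (m a x b) y z := by rw [hab]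
      _ = m a (m x b y) z := (hassoc a x b y z).1
      _ = m a x (m b y z) := (hassoc a x b y z).2
  have swap23 : ∀ x y z : G, m x y z = m x z y := by
    intro x y z
    rw [l3 x y z, l2 y z, hcomm12 y z, ← l2 z y, ← l3 x z y]
  intro x y z
  refine ⟨hcomm12 x y z, swap23 x y z, ?_, ?_, ?_⟩
  · rw [swap23 x y z, hcomm12 x z y, swap23 z x y]
  · rw [hcomm12 x y z, swap23 y x z]
  · rw [swap23 x y z, hcomm12 x z y]
end

section
/- A ternary semigroup (G,[ ]) equipped with a unary operation x ↦ x̄ satisfying the identities [y x x̄] = y and [x x̄ y] = y for all x,y is a ternary group, i.e. all equations [xab] = c, [ayb] = c, [abz] = c are uniquely solvable. -/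
/-- A ternary semigroup with a unary operation x ↦ x̄ satisfying
[y x x̄]=y and [x x̄ y]=y is a ternary group: all equations [xab]=c, [ayb]=c,
[abz]=c are uniquely solvable. -/
theorem stmt_7 {G : Type*} (m : G → G → G → G)
    (hassoc : ∀ x y z u v : G,
      m (m x y z) u v = m x (m y z u) v ∧ m x (m y z u) v = m x y (m z u v))
    (sk : G → G)
    (h1 : ∀ x y : G, m y x (sk x) = y)
    (h2 : ∀ x y : G, m x (sk x) y = y) :
    ∀ a b c : G,
      (∃! x, m x a b = c) ∧ (∃! y, m a y b = c) ∧ (∃! z, m a b z = c) := by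
  -- sk is an involution
  have hsk : ∀ x : G, sk (sk x) = x := fun x =>
    (h2 x (sk (sk x))).symm.trans (h1 (sk x) x)
  -- dual identities
  have h1' : ∀ x y : G, m y (sk x) x = y := fun x y => by
    have := h1 (sk x) y
    rwa [hsk] at this
  have h2' : ∀ x y : G, m (sk x) x y = y := fun x y => by
    have := h2 (sk x) y
    rwa [hsk] at this
  intro a b c
  refine ⟨⟨m c (sk b) (sk a), ?_, ?_⟩, ⟨m (sk a) c (sk b), ?_, ?_⟩,
    ⟨m (sk b) (sk a) c, ?_, ?_⟩⟩
  · show m (m c (sk b) (sk a)) a b = c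
    rw [(hassoc c (sk b) (sk a) a b).1, h1' a (sk b), h1' b c]
  · intro x hx
    have : m (m x a b) (sk b) (sk a) = m c (sk b) (sk a) := by rw [hx]
    rwa [(hassoc x a b (sk b) (sk a)).1, (hassoc x a b (sk b) (sk a)).2,
      h2 b (sk a), h1 a x] at this
  · show m a (m (sk a) c (sk b)) b = c
    rw [← (hassoc a (sk a) c (sk b) b).1, h2 a c, h1' b c]
  · intro y hy
    have : m (sk a) (m a y b) (sk b) = m (sk a) c (sk b) := by rw [hy]
    rwa [← (hassoc (sk a) a y b (sk b)).1, h2' a y, h1 b y] at this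
  · show m a b (m (sk b) (sk a) c) = c
    rw [← (hassoc a b (sk b) (sk a) c).2, h2 b (sk a), h2 a c]
  · intro z hz
    have : m (sk b) (sk a) (m a b z) = m (sk b) (sk a) c := by rw [hz]
    rwa [← (hassoc (sk b) (sk a) a b z).2, h2' a b, h2' b z] at this
end

section
/- A ternary semigroup (G,[ ]) is an idempotent ternary group (every element satisfies [xxx] = x) if and only if it satisfies the identities [yxx] = y and [xxy] = y for all x,y. -/
/-- A ternary semigroup is an idempotent ternary group iff it
satisfies the identities [yxx]=y and [xxy]=y. -/
theorem stmt_8 {G : Type*} (m : G → G → G → G)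
    (hassoc : ∀ x y z u v : G,
      m (m x y z) u v = m x (m y z u) v ∧ m x (m y z u) v = m x y (m z u v)) :
    ((∀ a b c : G,
        (∃! x, m x a b = c) ∧ (∃! y, m a y b = c) ∧ (∃! z, m a b z = c)) ∧
      (∀ x : G, m x x x = x)) ↔
    (∀ x y : G, m y x x = y ∧ m x x y = y) := by
  constructor
  · rintro ⟨hsolv, hid⟩ x y
    constructor
    · have h1 : m (m y x x) x x = m y x x := by
        rw [(hassoc y x x x x).1, hid]
      exact (hsolv x x (m y x x)).1.unique h1 rfl
    · have h2 : m x x (m x x y) = m x x y := by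
        rw [← (hassoc x x x x y).2, ← (hassoc x x x x y).1, hid]
      exact (hsolv x x (m x x y)).2.2.unique h2 rfl
  · intro h
    refine ⟨fun a b c => ?_, fun x => (h x x).1⟩
    refine ⟨⟨m c b a, ?_, ?_⟩, ⟨m a c b, ?_, ?_⟩, ⟨m b a c, ?_, ?_⟩⟩
    · show m (m c b a) a b = c
      calc m (m c b a) a b = m c (m b a a) b := (hassoc c b a a b).1
        _ = m c b b := by rw [(h a b).1]
        _ = c := (h b c).1
    · intro x hx
      calc x = m x a a := ((h a x).1).symm
        _ = m x (m a b b) a := by rw [(h b a).1]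
        _ = m (m x a b) b a := ((hassoc x a b b a).1).symm
        _ = m c b a := by rw [hx]
    · show m a (m a c b) b = c
      calc m a (m a c b) b = m (m a a c) b b := ((hassoc a a c b b).1).symm
        _ = m a a c := (h b _).1
        _ = c := (h a c).2
    · intro y hy
      calc y = m y b b := ((h b y).1).symm
        _ = m (m a a y) b b := by rw [(h a y).2]
        _ = m a (m a y b) b := (hassoc a a y b b).1
        _ = m a c b := by rw [hy]
    · show m a b (m b a c) = c
      calc m a b (m b a c) = m a (m b b a) c := ((hassoc a b b a c).2).symm
        _ = m a a c := by rw [(h b a).2]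
        _ = c := (h a c).2
    · intro z hz
      calc z = m b b z := ((h b z).2).symm
        _ = m b (m a a b) z := by rw [(h a b).2]
        _ = m b a (m a b z) := (hassoc b a a b z).2
        _ = m b a c := by rw [hz]
end

section
/- A ternary group satisfying the identity [x y x̄] = y for all x,y (or the identity [x̄ y x] = y) is commutative. -/
/-- A ternary group satisfying [x y x̄]=y for all x,y (or
[x̄ y x]=y) is commutative. -/
theorem stmt_9 {G : Type*} (m : G → G → G → G)
    (hassoc : ∀ x y z u v : G,
      m (m x y z) u v = m x (m y z u) v ∧ m x (m y z u) v = m x y (m z u v))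
    (hsolve : ∀ a b c : G,
      (∃! x, m x a b = c) ∧ (∃! y, m a y b = c) ∧ (∃! z, m a b z = c))
    (sk : G → G) (hsk : ∀ x : G, m x x (sk x) = x)
    (hsk_uniq : ∀ x z : G, m x x z = x → z = sk x)
    (hid : (∀ x y : G, m x y (sk x) = y) ∨ (∀ x y : G, m (sk x) y x = y)) :
    ∀ x y z : G, m x y z = m y x z ∧ m x y z = m x z y ∧ m x y z = m z y x ∧
      m x y z = m y z x ∧ m x y z = m z x y := by
  -- associativity in the two groupings
  have h1 : ∀ x y z u v : G, m (m x y z) u v = m x (m y z u) v :=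
    fun x y z u v => (hassoc x y z u v).1
  have h13 : ∀ x y z u v : G, m (m x y z) u v = m x y (m z u v) :=
    fun x y z u v => (hassoc x y z u v).1.trans (hassoc x y z u v).2
  -- cancellation lemmas
  have cancel1 : ∀ a b u v : G, m u a b = m v a b → u = v := by
    intro a b u v h
    exact (hsolve a b (m v a b)).1.unique h rfl
  have cancel2 : ∀ a b u v : G, m a u b = m a v b → u = v := by
    intro a b u v h
    exact (hsolve a b (m a v b)).2.1.unique h rfl
  have cancel3 : ∀ a b u v : G, m a b u = m a b v → u = v := by
    intro a b u v h
    exact (hsolve a b (m a b v)).2.2.unique h rfl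
  -- the skew element is a left inverse: m (sk a) a b = b
  have L3 : ∀ a b : G, m (sk a) a b = b := by
    intro a b
    have h := (h13 a a (sk a) a b).symm
    rw [hsk a] at h
    exact cancel3 a a _ _ h
  -- the skew element is a right inverse: m b a (sk a) = b
  have R3 : ∀ a b : G, m b a (sk a) = b := by
    intro a b
    have h := h13 b a (sk a) a a
    rw [L3 a a] at h
    exact cancel1 a a _ _ h
  -- derive the two adjacent transpositions, in either case of hid
  have key : (∀ x y z : G, m x y z = m y x z) ∧ (∀ x y z : G, m x y z = m x z y) := by
    rcases hid with hid1 | hid2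
    · have s12 : ∀ x y z : G, m x y z = m y x z := by
        intro x y z
        have h := h13 x y (sk x) x z
        rw [hid1 x y, L3 x z] at h
        exact h.symm
      refine ⟨s12, ?_⟩
      intro c a b
      have hA : m (sk c) (m c a b) c = m a b c := by
        have h := h1 (sk c) c a b c
        rw [L3 c a] at h
        exact h.symm
      have hB : m (sk c) (m c b a) c = m b a c := by
        have h := h1 (sk c) c b a c
        rw [L3 c b] at h
        exact h.symm
      exact cancel2 (sk c) c _ _ (hA.trans ((s12 a b c).trans hB.symm))
    · have s23 : ∀ x y z : G, m x y z = m x z y := by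
        intro x y z
        have h := h13 x z (sk z) y z
        rw [R3 z x, hid2 z y] at h
        exact h
      refine ⟨?_, s23⟩
      intro a b c
      have hA : m a (m a b c) (sk c) = m a a b := by
        have h := h1 a a b c (sk c)
        rw [R3 c (m a a b)] at h
        exact h.symm
      have hB : m a (m b a c) (sk c) = m a b a := by
        have h := h1 a b a c (sk c)
        rw [R3 c (m a b a)] at h
        exact h.symm
      have hab : m a a b = m a b a := s23 a a b
      exact cancel2 a (sk c) _ _ (hA.trans (hab.trans hB.symm))
  obtain ⟨s12, s23⟩ := key
  intro x y z
  refine ⟨s12 x y z, s23 x y z, ?_, ?_, ?_⟩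
  · exact (s23 x y z).trans ((s12 x z y).trans (s23 z x y))
  · exact (s12 x y z).trans (s23 y x z)
  · exact (s23 x y z).trans (s12 x z y)
end

section
/- (Gluskin–Hosszú theorem) For any ternary group (G,[ ]) and fixed a ∈ G, the operation x⊛y = [xay] makes G a binary group with identity ā, the map φ(x) = [ā x a] is an automorphism of (G,⊛) fixing a, and [xyz] = x ⊛ φ(y) ⊛ φ²(z) ⊛ b for all x,y,z, where b = [ā ā ā]. -/
/-- Gluskin–Hosszú: For a ternary group (G,[ ]) and fixed a,
x⊛y = [xay] makes G a group with identity ā, φ(x) = [ā x a] is an automorphism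
of (G,⊛) fixing a, and [xyz] = x ⊛ φ(y) ⊛ φ²(z) ⊛ b with b = [ā ā ā]. -/
theorem stmt_10 {G : Type*} (m : G → G → G → G)
    (hassoc : ∀ x y z u v : G,
      m (m x y z) u v = m x (m y z u) v ∧ m x (m y z u) v = m x y (m z u v))
    (hsolve : ∀ a b c : G,
      (∃! x, m x a b = c) ∧ (∃! y, m a y b = c) ∧ (∃! z, m a b z = c))
    (sk : G → G) (hsk : ∀ x : G, m x x (sk x) = x)
    (hsk_uniq : ∀ x z : G, m x x z = x → z = sk x)
    (a : G) :
    let mul : G → G → G := fun x y => m x a y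
    let φ : G → G := fun x => m (sk a) x a
    let b : G := m (sk a) (sk a) (sk a)
    -- (G,⊛) is a group with identity ā:
    (∀ x y z : G, mul (mul x y) z = mul x (mul y z)) ∧
    (∀ x : G, mul x (sk a) = x ∧ mul (sk a) x = x) ∧
    (∀ x : G, mul (m (sk a) (sk x) (sk a)) x = sk a ∧
              mul x (m (sk a) (sk x) (sk a)) = sk a) ∧
    -- φ is an automorphism fixing a:
    (∀ x y : G, φ (mul x y) = mul (φ x) (φ y)) ∧
    Function.Bijective φ ∧ φ a = a ∧
    -- the Gluskin–Hosszú formula: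
    (∀ x y z : G, m x y z = mul (mul (mul x (φ y)) (φ (φ z))) b) := by
  intro mul φ b
  have A1 : ∀ x y z u v : G, m (m x y z) u v = m x (m y z u) v :=
    fun x y z u v => (hassoc x y z u v).1
  have A2 : ∀ x y z u v : G, m x (m y z u) v = m x y (m z u v) :=
    fun x y z u v => (hassoc x y z u v).2
  have A : ∀ x y z u v : G, m (m x y z) u v = m x y (m z u v) :=
    fun x y z u v => (A1 x y z u v).trans (A2 x y z u v)
  have cancelR : ∀ p q z z' : G, m p q z = m p q z' → z = z' := by
    intro p q z z' h
    obtain ⟨-, -, w, -, hw⟩ := hsolve p q (m p q z')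
    exact (hw z h).trans (hw z' rfl).symm
  have cancelM : ∀ p q z z' : G, m p z q = m p z' q → z = z' := by
    intro p q z z' h
    obtain ⟨-, ⟨w, -, hw⟩, -⟩ := hsolve p q (m p z' q)
    exact (hw z h).trans (hw z' rfl).symm
  have exL : ∀ p q c : G, ∃ t, m t p q = c := fun p q c => ((hsolve p q c).1).exists
  have exM : ∀ p q c : G, ∃ t, m p t q = c := fun p q c => ((hsolve p q c).2.1).exists
  have exR : ∀ p q c : G, ∃ t, m p q t = c := fun p q c => ((hsolve p q c).2.2).exists
  have I1 : ∀ x y : G, m y x (sk x) = y := by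
    intro x y
    obtain ⟨t, ht⟩ := exL x x y
    calc m y x (sk x) = m (m t x x) x (sk x) := by rw [ht]
      _ = m t x (m x x (sk x)) := A t x x x (sk x)
      _ = y := by rw [hsk]; exact ht
  have I2 : ∀ x y : G, m (sk x) x y = y := by
    intro x y
    apply cancelR x x
    calc m x x (m (sk x) x y) = m (m x x (sk x)) x y := (A x x (sk x) x y).symm
      _ = m x x y := by rw [hsk]
  have I3 : ∀ x y : G, m y (sk x) x = y := by
    intro x y
    obtain ⟨t, ht⟩ := exL x x y
    calc m y (sk x) x = m (m t x x) (sk x) x := by rw [ht]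
      _ = m t (m x x (sk x)) x := A1 t x x (sk x) x
      _ = y := by rw [hsk]; exact ht
  have I4 : ∀ x y : G, m x (sk x) y = y := by
    intro x y
    obtain ⟨t, ht⟩ := exR x x y
    calc m x (sk x) y = m x (sk x) (m x x t) := by rw [ht]
      _ = m (m x (sk x) x) x t := (A x (sk x) x x t).symm
      _ = m x x t := by rw [I3]
      _ = y := ht
  refine ⟨?_, ?_, ?_, ?_, ⟨?_, ?_⟩, ?_, ?_⟩
  · intro x y z
    exact (A1 x a y a z).trans (A2 x a y a z)
  · exact fun x => ⟨I1 a x, I2 a x⟩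
  · intro x
    constructor
    · show m (m (sk a) (sk x) (sk a)) a x = sk a
      calc m (m (sk a) (sk x) (sk a)) a x = m (sk a) (sk x) (m (sk a) a x) :=
            A (sk a) (sk x) (sk a) a x
        _ = m (sk a) (sk x) x := by rw [I2]
        _ = sk a := I3 x (sk a)
    · show m x a (m (sk a) (sk x) (sk a)) = sk a
      calc m x a (m (sk a) (sk x) (sk a)) = m (m x a (sk a)) (sk x) (sk a) :=
            (A x a (sk a) (sk x) (sk a)).symm
        _ = m x (sk x) (sk a) := by rw [I1]
        _ = sk a := I4 x (sk a)
  · intro x y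
    show m (sk a) (m x a y) a = m (m (sk a) x a) a (m (sk a) y a)
    calc m (sk a) (m x a y) a = m (m (sk a) x a) y a := (A1 (sk a) x a y a).symm
      _ = m (m (m (sk a) x a) a (sk a)) y a := by rw [I1]
      _ = m (m (sk a) x a) a (m (sk a) y a) := A (m (sk a) x a) a (sk a) y a
  · intro x y h
    exact cancelM (sk a) a x y h
  · intro y
    obtain ⟨t, ht⟩ := exM (sk a) a y
    exact ⟨t, ht⟩
  · exact I2 a a
  · intro x y z
    show m x y z =
      m (m (m x a (m (sk a) y a)) a (m (sk a) (m (sk a) z a) a)) a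
        (m (sk a) (sk a) (sk a))
    have e1 : m x a (m (sk a) y a) = m x y a := by
      calc m x a (m (sk a) y a) = m (m x a (sk a)) y a := (A x a (sk a) y a).symm
        _ = m x y a := by rw [I1]
    have e2 : m (sk a) (m (sk a) z a) a = m (m (sk a) (sk a) z) a a :=
      (A1 (sk a) (sk a) z a a).symm
    rw [e1, e2]
    have e3 : m (m x y a) a (m (m (sk a) (sk a) z) a a)
        = m (m (m x y a) (sk a) z) a a := by
      calc m (m x y a) a (m (m (sk a) (sk a) z) a a)
          = m (m (m x y a) a (m (sk a) (sk a) z)) a a :=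
            (A (m x y a) a (m (sk a) (sk a) z) a a).symm
        _ = m (m (m (m x y a) a (sk a)) (sk a) z) a a := by
            rw [(A (m x y a) a (sk a) (sk a) z).symm]
        _ = m (m (m x y a) (sk a) z) a a := by rw [I1]
    rw [e3]
    set S := m (m x y a) (sk a) z with hS
    symm
    calc m (m S a a) a (m (sk a) (sk a) (sk a))
        = m (m (m S a a) a (sk a)) (sk a) (sk a) :=
          (A (m S a a) a (sk a) (sk a) (sk a)).symm
      _ = m (m S a a) (sk a) (sk a) := by rw [I1]
      _ = m S a (m a (sk a) (sk a)) := A S a a (sk a) (sk a)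
      _ = m S a (sk a) := by rw [I4]
      _ = S := I1 a S
      _ = m x y (m a (sk a) z) := by rw [hS, A x y a (sk a) z]
      _ = m x y z := by rw [I4]
end

section
/- Any medial ternary group is semicommutative (i.e. [xyz] = [zyx] for all x,y,z), and conversely any semicommutative ternary group is medial. -/
/-- A ternary group is medial iff it is semicommutative. -/
theorem stmt_11 {G : Type*} (m : G → G → G → G)
    (hassoc : ∀ x y z u v : G,
      m (m x y z) u v = m x (m y z u) v ∧ m x (m y z u) v = m x y (m z u v))
    (hsolve : ∀ a b c : G,
      (∃! x, m x a b = c) ∧ (∃! y, m a y b = c) ∧ (∃! z, m a b z = c)) :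
    (∀ x11 x12 x13 x21 x22 x23 x31 x32 x33 : G,
      m (m x11 x12 x13) (m x21 x22 x23) (m x31 x32 x33) =
      m (m x11 x21 x31) (m x12 x22 x32) (m x13 x23 x33)) ↔
    (∀ x y z : G, m x y z = m z y x) := by
  have h1 : ∀ x y z u v : G, m (m x y z) u v = m x (m y z u) v :=
    fun x y z u v => (hassoc x y z u v).1
  have h2 : ∀ x y z u v : G, m x (m y z u) v = m x y (m z u v) :=
    fun x y z u v => (hassoc x y z u v).2
  constructor
  · intro hmed x y z
    obtain ⟨e, he, -⟩ := (hsolve x x x).2.2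
    obtain ⟨f, hf, -⟩ := (hsolve x x x).1
    obtain ⟨w, hw, -⟩ := (hsolve x x y).2.1
    have runit : ∀ t : G, m t x e = t := by
      intro t
      obtain ⟨u, hu, -⟩ := (hsolve x x t).1
      calc m t x e = m (m u x x) x e := by rw [hu]
        _ = m u x (m x x e) := by rw [h1, h2]
        _ = m u x x := by rw [he]
        _ = t := hu
    have lunit : ∀ t : G, m f x t = t := by
      intro t
      obtain ⟨u, hu, -⟩ := (hsolve x x t).2.2
      calc m f x t = m f x (m x x u) := by rw [hu]
        _ = m (m f x x) x u := by rw [h1, h2]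
        _ = m x x u := by rw [hf]
        _ = t := hu
    calc m x y z = m (m f x x) (m x w x) (m z x e) := by rw [lunit x, runit z, hw]
      _ = m (m f x z) (m x w x) (m x x e) := hmed f x x x w x z x e
      _ = m z y x := by rw [lunit z, he, hw]
  · intro hs x11 x12 x13 x21 x22 x23 x31 x32 x33
    calc m (m x11 x12 x13) (m x21 x22 x23) (m x31 x32 x33)
      _ = (m x11 (m (m (m x12 x13 x21) x22 x23) x31 x32) x33) := by simp only [h1, h2]
      _ = (m x11 (m (m (m x21 x13 x12) x22 x23) x31 x32) x33) := by rw [hs x12 x13 x21]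
      _ = (m (m x11 x21 (m x13 (m x12 x22 x23) x31)) x32 x33) := by simp only [h1, h2]
      _ = (m (m x11 x21 (m x31 (m x12 x22 x23) x13)) x32 x33) := by rw [hs x13 (m x12 x22 x23) x31]
      _ = (m x11 (m x21 x31 (m x12 x22 (m x23 x13 x32))) x33) := by simp only [h1, h2]
      _ = (m x11 (m x21 x31 (m x12 x22 (m x32 x13 x23))) x33) := by simp only [h1, h2, hs x23 x13 x32]
      _ = m (m x11 x21 x31) (m x12 x22 x32) (m x13 x23 x33) := by simp only [h1, h2]
end

section
/- A ternary group is semicommutative if and only if there exists a ∈ G such that [xay] = [yax] for all x,y ∈ G. -/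
/-- A ternary group is semicommutative iff there exists a ∈ G
such that [xay] = [yax] for all x,y. -/
theorem stmt_12 {G : Type*} [Nonempty G] (m : G → G → G → G)
    (hassoc : ∀ x y z u v : G,
      m (m x y z) u v = m x (m y z u) v ∧ m x (m y z u) v = m x y (m z u v))
    (hsolve : ∀ a b c : G,
      (∃! x, m x a b = c) ∧ (∃! y, m a y b = c) ∧ (∃! z, m a b z = c)) :
    (∀ x y z : G, m x y z = m z y x) ↔ (∃ a : G, ∀ x y : G, m x a y = m y a x) := by
  constructor
  · intro h
    obtain ⟨a⟩ := (inferInstance : Nonempty G)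
    exact ⟨a, fun x y => h x a y⟩
  · rintro ⟨a, ha⟩ x y z
    obtain ⟨u, hu, -⟩ := (hsolve a a y).2.1
    calc m x y z = m x (m a u a) z := by rw [hu]
      _ = m (m x a u) a z := by rw [(hassoc x a u a z).1, (hassoc x a u a z).2]
      _ = m z a (m x a u) := ha _ _
      _ = m (m z a x) a u := by rw [(hassoc z a x a u).1, (hassoc z a x a u).2]
      _ = m (m x a z) a u := by rw [ha z x]
      _ = m x a (m z a u) := by rw [(hassoc x a z a u).1, (hassoc x a z a u).2]
      _ = m (m z a u) a x := ha _ _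
      _ = m z (m a u a) x := (hassoc z a u a x).1
      _ = m z y x := by rw [hu]
end

section
/- (Post coverage theorem) For any ternary group (G,[ ]) and fixed c ∈ G, the set G* = G × Z₂ with operation (x,0)⊛(y,0) = ([x y c̄],1), (x,0)⊛(y,1) = ([xyc],0), (x,1)⊛(y,0) = ([xcy],0), (x,1)⊛(y,1) = ([xcy],1) is a binary group with identity (c̄,1), the set H = {(x,1) : x ∈ G} is a normal subgroup with G*/H ≅ Z₂, and identifying x with (x,0), one has (x,0)⊛(y,0)⊛(z,0) = ([xyz],0) for all x,y,z ∈ G. -/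
/-- Post coverage theorem: G* = G × Z₂ with the indicated
operation is a group with identity (c̄,1); H = {(x,1)} is a normal subgroup
with G*/H ≅ Z₂ (expressed via a surjective homomorphism G* → Z₂ with
kernel H); and (x,0)⊛(y,0)⊛(z,0) = ([xyz],0). -/
theorem stmt_13 {G : Type*} (m : G → G → G → G)
    (hassoc : ∀ x y z u v : G,
      m (m x y z) u v = m x (m y z u) v ∧ m x (m y z u) v = m x y (m z u v))
    (hsolve : ∀ a b c : G,
      (∃! x, m x a b = c) ∧ (∃! y, m a y b = c) ∧ (∃! z, m a b z = c))
    (sk : G → G) (hsk : ∀ x : G, m x x (sk x) = x)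
    (hsk_uniq : ∀ x z : G, m x x z = x → z = sk x)
    (c : G)
    (op : G × ZMod 2 → G × ZMod 2 → G × ZMod 2)
    (h00 : ∀ x y : G, op (x, 0) (y, 0) = (m x y (sk c), 1))
    (h01 : ∀ x y : G, op (x, 0) (y, 1) = (m x y c, 0))
    (h10 : ∀ x y : G, op (x, 1) (y, 0) = (m x c y, 0))
    (h11 : ∀ x y : G, op (x, 1) (y, 1) = (m x c y, 1)) :
    -- (G*,⊛) is a group with identity (c̄,1):
    (∀ g h k : G × ZMod 2, op (op g h) k = op g (op h k)) ∧
    (∀ g : G × ZMod 2, op g (sk c, 1) = g ∧ op (sk c, 1) g = g) ∧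
    (∀ g : G × ZMod 2, ∃ h, op g h = (sk c, 1) ∧ op h g = (sk c, 1)) ∧
    -- the parity map g ↦ g.2 + 1 is a surjective homomorphism onto Z₂
    -- whose kernel is H = {(x,1) : x ∈ G}, so H ⊴ G* and G*/H ≅ Z₂:
    (∀ g h : G × ZMod 2, (op g h).2 + 1 = (g.2 + 1) + (h.2 + 1)) ∧
    Function.Surjective (fun g : G × ZMod 2 => g.2 + 1) ∧
    (∀ g : G × ZMod 2, g.2 + 1 = (0 : ZMod 2) ↔ g.2 = 1) ∧
    -- identifying x with (x,0):
    (∀ x y z : G, op (op (x, 0) (y, 0)) (z, 0) = (m x y z, 0)) := by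
  set e := sk c with he
  have A1 : ∀ x y z u v : G, m (m x y z) u v = m x (m y z u) v :=
    fun x y z u v => (hassoc x y z u v).1
  have A2 : ∀ x y z u v : G, m x (m y z u) v = m x y (m z u v) :=
    fun x y z u v => (hassoc x y z u v).2
  have A13 : ∀ x y z u v : G, m (m x y z) u v = m x y (m z u v) :=
    fun x y z u v => (A1 x y z u v).trans (A2 x y z u v)
  have u2 : ∀ a b y y' : G, m a y b = m a y' b → y = y' := by
    intro a b y y' h
    obtain ⟨w, hw, huniq⟩ := (hsolve a b (m a y' b)).2.1
    exact (huniq y h).trans (huniq y' rfl).symm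
  have u3 : ∀ a b z z' : G, m a b z = m a b z' → z = z' := by
    intro a b z z' h
    obtain ⟨w, hw, huniq⟩ := (hsolve a b (m a b z')).2.2
    exact (huniq z h).trans (huniq z' rfl).symm
  have hcce : m c c e = c := hsk c
  have hecc : m e c c = c := by
    apply u3 c c
    calc m c c (m e c c) = m (m c c e) c c := (A13 c c e c c).symm
    _ = m c c c := by rw [hcce]
  have hcec : m c e c = c := by
    apply u2 c c
    calc m c (m c e c) c = m (m c c e) c c := (A1 c c e c c).symm
    _ = m c c c := by rw [hcce]
  have hxce : ∀ x, m x c e = x := by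
    intro x
    obtain ⟨u, hu, -⟩ := (hsolve c c x).1
    calc m x c e = m (m u c c) c e := by rw [hu]
    _ = m u c (m c c e) := A13 u c c c e
    _ = x := by rw [hcce, hu]
  have hecx : ∀ x, m e c x = x := by
    intro x
    obtain ⟨v, hv, -⟩ := (hsolve c c x).2.2
    calc m e c x = m e c (m c c v) := by rw [hv]
    _ = m (m e c c) c v := (A13 e c c c v).symm
    _ = x := by rw [hecc, hv]
  have hxec : ∀ x, m x e c = x := by
    intro x
    obtain ⟨u, hu, -⟩ := (hsolve c c x).1
    calc m x e c = m (m u c c) e c := by rw [hu]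
    _ = m u c (m c e c) := A13 u c c e c
    _ = x := by rw [hcec, hu]
  have two : ∀ a : ZMod 2, a = 0 ∨ a = 1 := by decide
  -- associativity
  have Aop : ∀ g h k : G × ZMod 2, op (op g h) k = op g (op h k) := by
    rintro ⟨x, ε⟩ ⟨y, δ⟩ ⟨z, γ⟩
    rcases two ε with rfl | rfl <;> rcases two δ with rfl | rfl <;>
      rcases two γ with rfl | rfl <;>
      simp only [h00, h01, h10, h11] <;> rw [Prod.mk.injEq] <;>
      refine ⟨?_, rfl⟩
    · calc m (m x y e) c z = m x y (m e c z) := A13 x y e c z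
      _ = m x y z := by rw [hecx]
      _ = m (m x y z) e c := (hxec _).symm
      _ = m x (m y z e) c := A1 x y z e c
    · calc m (m x y e) c z = m x y (m e c z) := A13 x y e c z
      _ = m x y z := by rw [hecx]
      _ = m (m x y z) c e := (hxce _).symm
      _ = m x (m y z c) e := A1 x y z c e
    · exact A1 x y c z e
    · exact A1 x y c z c
    · exact A13 x c y z e
    · exact A13 x c y z c
    · exact A13 x c y c z
    · exact A13 x c y c z
  -- identity
  have Iop : ∀ g : G × ZMod 2, op g (e, 1) = g ∧ op (e, 1) g = g := by
    rintro ⟨x, ε⟩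
    rcases two ε with rfl | rfl
    · rw [h01, h10, hxec, hecx]
      exact ⟨rfl, rfl⟩
    · rw [h11, h11, hxce, hecx]
      exact ⟨rfl, rfl⟩
  -- right inverses
  have Rinv : ∀ g : G × ZMod 2, ∃ h, op g h = (e, 1) := by
    rintro ⟨x, ε⟩
    rcases two ε with rfl | rfl
    · obtain ⟨y, hy, -⟩ := (hsolve x e e).2.1
      exact ⟨(y, 0), by rw [h00, hy]⟩
    · obtain ⟨y, hy, -⟩ := (hsolve x c e).2.2
      exact ⟨(y, 1), by rw [h11, hy]⟩
  have Inv : ∀ g : G × ZMod 2, ∃ h, op g h = (e, 1) ∧ op h g = (e, 1) := by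
    intro g
    obtain ⟨h, hh⟩ := Rinv g
    obtain ⟨k, hk⟩ := Rinv h
    refine ⟨h, hh, ?_⟩
    calc op h g = op (op h g) (e, 1) := ((Iop _).1).symm
    _ = op (op h g) (op h k) := by rw [hk]
    _ = op h (op g (op h k)) := Aop h g (op h k)
    _ = op h (op (op g h) k) := by rw [Aop g h k]
    _ = op h (op (e, 1) k) := by rw [hh]
    _ = op h k := by rw [(Iop k).2]
    _ = (e, 1) := hk
  refine ⟨Aop, Iop, Inv, ?_, ?_, ?_, ?_⟩
  · rintro ⟨x, ε⟩ ⟨y, δ⟩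
    rcases two ε with rfl | rfl <;> rcases two δ with rfl | rfl <;>
      simp only [h00, h01, h10, h11] <;> decide
  · intro b
    rcases two b with rfl | rfl
    · exact ⟨(c, 1), by show (1 : ZMod 2) + 1 = 0; decide⟩
    · exact ⟨(c, 0), by show (0 : ZMod 2) + 1 = 1; decide⟩
  · rintro ⟨x, ε⟩
    rcases two ε with rfl | rfl <;> simp <;> decide
  · intro x y z
    rw [h00, h10]
    rw [Prod.mk.injEq]
    refine ⟨?_, rfl⟩
    calc m (m x y e) c z = m x y (m e c z) := A13 x y e c z
    _ = m x y z := by rw [hecx]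
end

section
/- For a ternary group (G,[ ]), the operation (x,y)∗(u,v) = ([xyu], v) on G × G is associative, every element (x, x̄) is a left identity, and (G×G, ∗) is left cancellative and a right quasigroup (for all (a,b),(c,d) there is a unique (x,y) with (a,b)∗(x,y) = (c,d)). -/
/-- For a ternary group (G,[ ]), the operation
(x,y)∗(u,v) = ([xyu],v) on G×G is associative, every (x,x̄) is a left
identity, and (G×G,∗) is left cancellative and a right quasigroup. -/
theorem stmt_14 {G : Type*} (m : G → G → G → G)
    (hassoc : ∀ x y z u v : G,
      m (m x y z) u v = m x (m y z u) v ∧ m x (m y z u) v = m x y (m z u v))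
    (hsolve : ∀ a b c : G,
      (∃! x, m x a b = c) ∧ (∃! y, m a y b = c) ∧ (∃! z, m a b z = c))
    (sk : G → G) (hsk : ∀ x : G, m x x (sk x) = x)
    (hsk_uniq : ∀ x z : G, m x x z = x → z = sk x) :
    let op : G × G → G × G → G × G := fun p q => (m p.1 p.2 q.1, q.2)
    (∀ p q r : G × G, op (op p q) r = op p (op q r)) ∧
    (∀ x : G, ∀ p : G × G, op (x, sk x) p = p) ∧
    (∀ a p q : G × G, op a p = op a q → p = q) ∧
    (∀ a c : G × G, ∃! p : G × G, op a p = c) := by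
  intro op
  have key : ∀ x a : G, m x (sk x) a = a := by
    intro x a
    have h1 := (hassoc x x (sk x) a a).1
    rw [hsk x] at h1
    -- h1 : m x a a = m x (m x (sk x) a) a
    obtain ⟨y, hy, huniq⟩ := (hsolve x a (m x a a)).2.1
    have e1 : m x (m x (sk x) a) a = m x a a := h1.symm
    exact (huniq _ e1).trans (huniq a rfl).symm
  refine ⟨?_, ?_, ?_, ?_⟩
  · rintro ⟨a, b⟩ ⟨c, d⟩ ⟨e, f⟩
    simp only [op]
    have h := (hassoc a b c d e).1.trans (hassoc a b c d e).2
    exact Prod.ext h rfl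
  · rintro x ⟨u, v⟩
    simp only [op]
    exact Prod.ext (key x u) rfl
  · rintro ⟨a, b⟩ ⟨p1, p2⟩ ⟨q1, q2⟩ h
    simp only [op, Prod.mk.injEq] at h
    obtain ⟨z, hz, huniq⟩ := (hsolve a b (m a b q1)).2.2
    exact Prod.ext ((huniq p1 h.1).trans (huniq q1 rfl).symm) h.2
  · rintro ⟨a, b⟩ ⟨c, d⟩
    obtain ⟨z, hz, huniq⟩ := (hsolve a b c).2.2
    refine ⟨(z, d), ?_, ?_⟩
    · show (m a b z, d) = (c, d); exact Prod.ext hz rfl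
    · rintro ⟨p1, p2⟩ h
      simp only [op, Prod.mk.injEq] at h
      exact Prod.ext (huniq p1 h.1) h.2
end

section
/- Let Π^L : G × G → End V be a left representation of a ternary group (G,[ ]), i.e. Π^L(x₁,x₂)∘Π^L(x₃,x₄) = Π^L([x₁x₂x₃], x₄) and Π^L(x, x̄) = id_V. Then Π^L([x₁x₂x₃], x₄) = Π^L(x₁, [x₂x₃x₄]) for all x₁,x₂,x₃,x₄ ∈ G. -/
/-- For a left representation P^L of a ternary group,
P^L([x₁x₂x₃], x₄) = P^L(x₁, [x₂x₃x₄]). -/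
theorem stmt_15 {G : Type*} (m : G → G → G → G)
    (hassoc : ∀ x y z u v : G,
      m (m x y z) u v = m x (m y z u) v ∧ m x (m y z u) v = m x y (m z u v))
    (hsolve : ∀ a b c : G,
      (∃! x, m x a b = c) ∧ (∃! y, m a y b = c) ∧ (∃! z, m a b z = c))
    (sk : G → G) (hsk : ∀ x : G, m x x (sk x) = x)
    (hsk_uniq : ∀ x z : G, m x x z = x → z = sk x)
    {K : Type*} [Field K] {V : Type*} [AddCommGroup V] [Module K V]
    (P : G → G → Module.End K V)
    (hrep : ∀ x1 x2 x3 x4 : G, P x1 x2 * P x3 x4 = P (m x1 x2 x3) x4)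
    (hunit : ∀ x : G, P x (sk x) = 1) :
    ∀ x1 x2 x3 x4 : G, P (m x1 x2 x3) x4 = P x1 (m x2 x3 x4) := by
  intro x1 x2 x3 x4
  have h1 : P x1 (m x2 x3 x4) = P x1 (m x2 x3 x4) * P x4 (sk x4) := by
    rw [hunit, mul_one]
  rw [h1, hrep, ← (hassoc x1 x2 x3 x4 x4).1, ← hrep (m x1 x2 x3) x4 x4 (sk x4),
    hunit, mul_one]
end

section
/- If (G,[ ]) is a medial ternary group, then any left representation has commuting values: Π^L(x₁,x₂) ∘ Π^L(x₃,x₄) = Π^L(x₃,x₄) ∘ Π^L(x₁,x₂) for all x₁,x₂,x₃,x₄ ∈ G. If moreover (G,[ ]) is commutative, then Π^L(x,y) = Π^L(y,x). -/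
/-- For a medial (= semicommutative) ternary group, any left
representation has commuting values; if moreover the group is commutative,
then P^L(x,y) = P^L(y,x). -/
theorem stmt_17 {G : Type*} (m : G → G → G → G)
    (hassoc : ∀ x y z u v : G,
      m (m x y z) u v = m x (m y z u) v ∧ m x (m y z u) v = m x y (m z u v))
    (hsolve : ∀ a b c : G,
      (∃! x, m x a b = c) ∧ (∃! y, m a y b = c) ∧ (∃! z, m a b z = c))
    (sk : G → G) (hsk : ∀ x : G, m x x (sk x) = x)
    (hsk_uniq : ∀ x z : G, m x x z = x → z = sk x)
    {K : Type*} [Field K] {V : Type*} [AddCommGroup V] [Module K V]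
    (P : G → G → Module.End K V)
    (hrep : ∀ x1 x2 x3 x4 : G, P x1 x2 * P x3 x4 = P (m x1 x2 x3) x4)
    (hunit : ∀ x : G, P x (sk x) = 1)
    (hmedial : ∀ x y z : G, m x y z = m z y x) :
    (∀ x1 x2 x3 x4 : G, P x1 x2 * P x3 x4 = P x3 x4 * P x1 x2) ∧
    ((∀ x y z : G, m x y z = m y x z ∧ m x y z = m x z y) →
      ∀ x y : G, P x y = P y x) := by
  -- stabilization lemma
  have hstab : ∀ a b z : G, P a b = P (m a b z) (sk z) := by
    intro a b z
    have := hrep a b z (sk z)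
    rw [hunit z, mul_one] at this
    exact this
  refine ⟨?_, ?_⟩
  · intro x1 x2 x3 x4
    rw [hrep, hrep, hstab (m x1 x2 x3) x4 x1, hstab (m x3 x4 x1) x2 x1]
    congr 1
    calc m (m x1 x2 x3) x4 x1
        = m x1 x2 (m x3 x4 x1) := (hassoc x1 x2 x3 x4 x1).1.trans (hassoc x1 x2 x3 x4 x1).2
      _ = m (m x3 x4 x1) x2 x1 := hmedial _ _ _
  · intro hcomm x y
    rw [hstab x y x, hstab y x x]
    congr 1
    exact (hcomm x y x).1
end

section
/- Let (G,[ ]) = der(G,⊙) be a ternary group derived from a binary group (G,⊙) with identity e (so [xyz] = x⊙y⊙z). Then π ↦ Π^L with Π^L(x,y) = π(x)∘π(y) and Π^L ↦ π with π(x) = Π^L(x,e) give a one-to-one correspondence between representations of the binary group (G,⊙) on V and left representations of (G,[ ]) on V. -/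
/-- For the ternary group derived from a binary group G
([xyz] = x*y*z, skew = inverse), the assignments π ↦ P^L, P^L(x,y) = π(x)∘π(y),
and P^L ↦ π, π(x) = P^L(x,e), form a one-to-one correspondence between
representations of (G,⊙) and left representations of der(G,⊙). -/
theorem stmt_18 {G : Type*} [Group G]
    {K : Type*} [Field K] {V : Type*} [AddCommGroup V] [Module K V] :
    let m : G → G → G → G := fun x y z => x * y * z
    let IsLeftRep : (G → G → Module.End K V) → Prop := fun P =>
      (∀ x1 x2 x3 x4 : G, P x1 x2 * P x3 x4 = P (m x1 x2 x3) x4) ∧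
      (∀ x : G, P x x⁻¹ = 1)
    -- every binary representation yields a left representation:
    (∀ π : Representation K G V, IsLeftRep (fun x y => π x * π y)) ∧
    -- every left representation yields a binary representation π(x) = P(x,e):
    (∀ P : G → G → Module.End K V, IsLeftRep P →
      ((∀ x y : G, P (x * y) 1 = P x 1 * P y 1) ∧ P 1 1 = 1 ∧
      -- and the correspondence is one-to-one:
       (∀ x y : G, P x y = P x 1 * P y 1))) := by
  intro m IsLeftRep
  constructor
  · intro π
    constructor
    · intro x1 x2 x3 x4
      simp only [m, map_mul, mul_assoc]
    · intro x
      simp [← map_mul]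
  · intro P hP
    obtain ⟨h1, h2⟩ := hP
    have h11 : P 1 1 = 1 := by simpa using h2 1
    have key : ∀ x y : G, P x y = P (x * y) 1 := by
      intro x y
      calc P x y = P x y * P 1 1 := by rw [h11, mul_one]
        _ = P (m x y 1) 1 := h1 x y 1 1
        _ = P (x * y) 1 := by simp [m]
    refine ⟨?_, h11, ?_⟩
    · intro x y
      rw [h1 x 1 y 1]
      simp [m]
    · intro x y
      rw [h1 x 1 y 1]
      simp only [m, mul_one]
      exact key x y
end

section
/- Every left representation of a commutative ternary group (G,[ ]) is a middle representation, i.e. it satisfies Π(x₃,y₃)∘Π(x₂,y₂)∘Π(x₁,y₁) = Π([x₃x₂x₁], [y₁y₂y₃]) and Π(x,y)∘Π(x̄,ȳ) = Π(x̄,ȳ)∘Π(x,y) = id_V. -/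
/-- Every left representation of a commutative ternary group is
a middle representation. -/
theorem stmt_19 {G : Type*} (m : G → G → G → G)
    (hassoc : ∀ x y z u v : G,
      m (m x y z) u v = m x (m y z u) v ∧ m x (m y z u) v = m x y (m z u v))
    (hsolve : ∀ a b c : G,
      (∃! x, m x a b = c) ∧ (∃! y, m a y b = c) ∧ (∃! z, m a b z = c))
    (sk : G → G) (hsk : ∀ x : G, m x x (sk x) = x)
    (hsk_uniq : ∀ x z : G, m x x z = x → z = sk x)
    (hcomm : ∀ x y z : G, m x y z = m y x z ∧ m x y z = m x z y)
    {K : Type*} [Field K] {V : Type*} [AddCommGroup V] [Module K V]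
    (P : G → G → Module.End K V)
    (hrep : ∀ x1 x2 x3 x4 : G, P x1 x2 * P x3 x4 = P (m x1 x2 x3) x4)
    (hunit : ∀ x : G, P x (sk x) = 1) :
    (∀ x1 x2 x3 y1 y2 y3 : G,
      P x3 y3 * P x2 y2 * P x1 y1 = P (m x3 x2 x1) (m y1 y2 y3)) ∧
    (∀ x y : G, P x y * P (sk x) (sk y) = 1 ∧ P (sk x) (sk y) * P x y = 1) := by
  -- basic commutativity lemmas
  have c12 : ∀ a b c : G, m a b c = m b a c := fun a b c => (hcomm a b c).1
  have c23 : ∀ a b c : G, m a b c = m a c b := fun a b c => (hcomm a b c).2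
  -- associativity in flattened form
  have a3 : ∀ a b c d e : G, m (m a b c) d e = m a b (m c d e) := fun a b c d e =>
    (hassoc a b c d e).1.trans (hassoc a b c d e).2
  -- swap of positions 2 and 3 in a flattened product
  have sw : ∀ a b c d e : G, m a b (m c d e) = m a c (m b d e) := by
    intro a b c d e
    rw [← a3, c23 a b c, a3]
  -- identity property of the skew element
  have hid : ∀ x z : G, m x (sk x) z = z := by
    intro x z
    obtain ⟨w, hw, -⟩ := (hsolve x x z).2.1
    calc m x (sk x) z = m x (sk x) (m x w x) := by rw [hw]
      _ = m (m x (sk x) x) w x := (a3 _ _ _ _ _).symm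
      _ = m (m x x (sk x)) w x := by rw [c23 x (sk x) x]
      _ = m x w x := by rw [hsk]
      _ = z := hw
  -- sk is an involution
  have skk : ∀ y : G, sk (sk y) = y := by
    intro y
    have h : m (sk y) (sk y) y = sk y := by
      rw [c23 (sk y) (sk y) y, c12 (sk y) y (sk y)]
      exact hid y (sk y)
    exact (hsk_uniq (sk y) y h).symm
  -- key lemma : absorb an extra pair
  have keyP : ∀ a b e : G, P a b = P (m a b e) (sk e) := by
    intro a b e
    rw [← hrep, hunit, mul_one]
  constructor
  · intro x1 x2 x3 y1 y2 y3
    -- the element-level permutation identity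
    have elem : m (m (m x3 y3 x2) y2 x1) y1 x1 = m (m x3 x2 x1) (m y1 y2 y3) x1 := by
        calc m (m (m x3 y3 x2) y2 x1) y1 x1
            = m (m x3 y3 x2) y2 (m x1 y1 x1) := a3 _ _ _ _ _
          _ = m x3 y3 (m x2 y2 (m x1 y1 x1)) := a3 _ _ _ _ _
          _ = m x3 x2 (m y3 y2 (m x1 y1 x1)) := sw _ _ _ _ _
          _ = m x3 x2 (m y3 y2 (m x1 x1 y1)) := by rw [c23 x1 y1 x1]
          _ = m x3 x2 (m y3 x1 (m y2 x1 y1)) := by rw [sw y3 y2 x1 x1 y1]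
          _ = m x3 x2 (m y3 x1 (m x1 y2 y1)) := by rw [c12 y2 x1 y1]
          _ = m x3 x2 (m x1 y3 (m x1 y2 y1)) := by rw [c12 y3 x1 (m x1 y2 y1)]
          _ = m x3 x2 (m x1 x1 (m y3 y2 y1)) := by rw [sw x1 y3 x1 y2 y1]
          _ = m x3 x2 (m x1 x1 (m y3 y1 y2)) := by rw [c23 y3 y2 y1]
          _ = m x3 x2 (m x1 x1 (m y1 y3 y2)) := by rw [c12 y3 y1 y2]
          _ = m x3 x2 (m x1 x1 (m y1 y2 y3)) := by rw [c23 y1 y3 y2]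
          _ = m x3 x2 (m x1 (m y1 y2 y3) x1) := by rw [c23 x1 x1 (m y1 y2 y3)]
          _ = m (m x3 x2 x1) (m y1 y2 y3) x1 := (a3 _ _ _ _ _).symm
    calc P x3 y3 * P x2 y2 * P x1 y1
        = P (m (m x3 y3 x2) y2 x1) y1 := by rw [hrep, hrep]
      _ = P (m (m (m x3 y3 x2) y2 x1) y1 x1) (sk x1) := keyP _ _ _
      _ = P (m (m x3 x2 x1) (m y1 y2 y3) x1) (sk x1) := by rw [elem]
      _ = P (m x3 x2 x1) (m y1 y2 y3) := (keyP _ _ _).symm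
  · intro x y
    constructor
    · calc P x y * P (sk x) (sk y) = P (m x y (sk x)) (sk y) := hrep _ _ _ _
        _ = P (m x (sk x) y) (sk y) := by rw [c23 x y (sk x)]
        _ = P y (sk y) := by rw [hid]
        _ = 1 := hunit y
    · calc P (sk x) (sk y) * P x y = P (m (sk x) (sk y) x) y := hrep _ _ _ _
        _ = P (m x (sk x) (sk y)) y := by rw [c23 (sk x) (sk y) x, c12 (sk x) x (sk y)]
        _ = P (sk y) y := by rw [hid]
        _ = P (sk y) (sk (sk y)) := by rw [skk]
        _ = 1 := hunit (sk y)
end
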